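/- For a rational number r with 0 < r < 1 and numerator at least 2, the additive monoid S_r = ⟨r^n : n ∈ ℕ₀⟩ generated by the powers of r is an MCD-monoid: every finite nonempty subset of S_r admits a maximal common (additive) divisor. -/

import Mathlib

/-- The additive submonoid `S_r = ⟨rⁿ : n ∈ ℕ₀⟩` of `ℚ` generated by the powers of `r`. -/
def Sr (r : ℚ) : AddSubmonoid ℚ :=
  AddSubmonoid.closure {x : ℚ | ∃ n : ℕ, x = r ^ n}

namespace Mcd

def repS (r : ℚ) (c : ℕ → ℕ) (N : ℕ) : ℚ := ∑ n ∈ Finset.range N, (c n : ℚ) * r ^ n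

lemma sum_pow_mem (r : ℚ) (c : ℕ → ℕ) (s : Finset ℕ) :
    (∑ n ∈ s, (c n : ℚ) * r ^ n) ∈ Sr r := by
  refine AddSubmonoid.sum_mem _ fun n _ => ?_
  have h : r ^ n ∈ Sr r := AddSubmonoid.subset_closure ⟨n, rfl⟩
  simpa [nsmul_eq_mul] using AddSubmonoid.nsmul_mem (Sr r) h (c n)

lemma repS_mem (r : ℚ) (c : ℕ → ℕ) (N : ℕ) : repS r c N ∈ Sr r :=
  sum_pow_mem r c _

lemma repS_congr (r : ℚ) (c : ℕ → ℕ) {M M' : ℕ} (h : M ≤ M')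
    (hc : ∀ n, M ≤ n → c n = 0) : repS r c M' = repS r c M := by
  unfold repS
  refine (Finset.sum_subset (Finset.range_subset_range.mpr h) fun n _ hn => ?_).symm
  have : M ≤ n := le_of_not_gt (fun hlt => hn (Finset.mem_range.mpr hlt))
  simp [hc n this]

lemma Sr_nonneg {r x : ℚ} (h0 : 0 < r) (hx : x ∈ Sr r) : 0 ≤ x := by
  induction hx using AddSubmonoid.closure_induction with
  | mem x hx => obtain ⟨n, rfl⟩ := hx; positivity
  | zero => exact le_refl 0
  | add x y _ _ hx hy => exact add_nonneg hx hy

lemma exists_rep {r x : ℚ} (hx : x ∈ Sr r) :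
    ∃ N c, (∀ n, N ≤ n → c n = 0) ∧ x = repS r c N := by
  induction hx using AddSubmonoid.closure_induction with
  | mem x hx =>
    obtain ⟨k, rfl⟩ := hx
    refine ⟨k + 1, fun n => if n = k then 1 else 0, fun n hn => ?_, ?_⟩
    · have : n ≠ k := by omega
      simp [this]
    · simp [repS, Finset.sum_ite_eq']
  | zero => exact ⟨0, fun _ => 0, fun _ _ => rfl, by simp [repS]⟩
  | add x y hx hy ihx ihy =>
    obtain ⟨N₁, c₁, hz₁, h₁⟩ := ihx
    obtain ⟨N₂, c₂, hz₂, h₂⟩ := ihy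
    refine ⟨max N₁ N₂, fun n => c₁ n + c₂ n, fun n hn => ?_, ?_⟩
    · dsimp only
      rw [hz₁ n (le_trans (le_max_left _ _) hn), hz₂ n (le_trans (le_max_right _ _) hn)]
    · have e₁ : repS r c₁ (max N₁ N₂) = x := by
        rw [repS_congr r c₁ (le_max_left N₁ N₂) hz₁, h₁]
      have e₂ : repS r c₂ (max N₁ N₂) = y := by
        rw [repS_congr r c₂ (le_max_right N₁ N₂) hz₂, h₂]
      rw [← e₁, ← e₂]
      simp [repS, Finset.sum_add_distrib, add_mul]

lemma pow_mul_den_pow (r : ℚ) {n m : ℕ} (h : n ≤ m) :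
    r ^ n * (r.den : ℚ) ^ m = (r.num : ℚ) ^ n * (r.den : ℚ) ^ (m - n) := by
  have h1 : ((r.den : ℚ)) ^ m = (r.den : ℚ) ^ n * (r.den : ℚ) ^ (m - n) := by
    rw [← pow_add]; congr 1; omega
  rw [h1, ← mul_assoc, ← mul_pow, Rat.mul_den_eq_num]

/-- integrality of representations -/
lemma repS_int (r : ℚ) (c : ℕ → ℕ) {M m : ℕ} (h : M ≤ m + 1) :
    repS r c M * (r.den : ℚ) ^ m
      = ((∑ n ∈ Finset.range M, (c n : ℤ) * r.num ^ n * (r.den : ℤ) ^ (m - n) : ℤ) : ℚ) := by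
  unfold repS
  rw [Finset.sum_mul]
  push_cast
  refine Finset.sum_congr rfl fun n hn => ?_
  have hnm : n ≤ m := by have := Finset.mem_range.mp hn; omega
  rw [mul_assoc, pow_mul_den_pow r hnm]
  ring

/-- decomposition: top coefficient mod den -/
lemma repS_decomp (r : ℚ) (c : ℕ → ℕ) (m : ℕ) :
    ∃ w : ℤ, repS r c (m + 1) * (r.den : ℚ) ^ m
      = (((c m : ℤ) * r.num ^ m + r.den * w : ℤ) : ℚ) := by
  refine ⟨∑ n ∈ Finset.range m, (c n : ℤ) * r.num ^ n * (r.den : ℤ) ^ (m - 1 - n), ?_⟩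
  rw [repS_int r c (le_refl (m + 1))]
  congr 1
  rw [Finset.sum_range_succ, Nat.sub_self, pow_zero, mul_one, Finset.mul_sum]
  rw [add_comm]
  congr 1
  refine Finset.sum_congr rfl fun n hn => ?_
  have hnm : n < m := Finset.mem_range.mp hn
  have : (r.den : ℤ) ^ (m - n) = (r.den : ℤ) ^ (m - 1 - n) * r.den := by
    rw [← pow_succ]; congr 1; omega
  rw [this]; ring

/-- adding `m` at index `j` -/
lemma repS_update (r : ℚ) (c : ℕ → ℕ) {N j : ℕ} (m : ℕ) (hj : j < N) :
    repS r (fun n => if n = j then c j + m else c n) N = repS r c N + m * r ^ j := by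
  unfold repS
  have : ∀ n ∈ Finset.range N,
      ((if n = j then c j + m else c n : ℕ) : ℚ) * r ^ n
        = (c n : ℚ) * r ^ n + (if n = j then (m : ℚ) * r ^ j else 0) := by
    intro n _
    by_cases h : n = j
    · simp [h]; push_cast; ring
    · simp [h]
  rw [Finset.sum_congr rfl this, Finset.sum_add_distrib,
    Finset.sum_ite_eq' (Finset.range N) j (fun _ => (m : ℚ) * r ^ j)]
  simp [hj]


/-- every representation can be normalized: coefficients < den at positive indices -/
lemma exists_canonical_aux (r : ℚ) (h0 : 0 < r) :
    ∀ N (c : ℕ → ℕ), ∃ c' : ℕ → ℕ,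
      (∀ n, N ≤ n → c' n = 0) ∧ (∀ n, 1 ≤ n → c' n < r.den) ∧
      repS r c' N = repS r c N := by
  have hbpos : 0 < r.den := r.pos
  intro N
  induction N with
  | zero =>
    intro c
    exact ⟨fun _ => 0, fun _ _ => rfl, fun _ _ => hbpos, by simp [repS]⟩
  | succ N ih =>
    intro c
    rcases Nat.eq_zero_or_pos N with hN0 | hNpos
    · subst hN0
      refine ⟨fun n => if n = 0 then c 0 else 0, fun n hn => ?_, fun n hn => ?_, ?_⟩
      · have : n ≠ 0 := by omega
        simp [this]
      · have : n ≠ 0 := by omega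
        simp [this, hbpos]
      · simp [repS]
    · -- N ≥ 1 ; split top coefficient c N = q * den + s
      set q := c N / r.den with hq
      set s := c N % r.den with hs
      have hqs : c N = r.den * q + s := (Nat.div_add_mod (c N) r.den).symm
      have hsb : s < r.den := Nat.mod_lt _ hbpos
      set d : ℕ → ℕ := fun k =>
        if k = N - 1 then c (N - 1) + q * r.num.toNat else c k with hd
      obtain ⟨c'', hz'', hb'', he''⟩ := ih d
      refine ⟨fun k => if k = N then s else c'' k, fun n hn => ?_, fun n hn => ?_, ?_⟩
      · have : n ≠ N := by omega
        simp only [this, if_false]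
        exact hz'' n (by omega)
      · by_cases h : n = N
        · simpa [h] using hsb
        · simp only [h, if_false]
          rcases Nat.lt_or_ge n N with h' | h'
          · exact hb'' n hn
          · rw [hz'' n h']; exact hbpos
      · -- value equality
        have hnum_pos : (0 : ℤ) < r.num := Rat.num_pos.mpr h0
        have hAq : ((r.num.toNat : ℚ)) = (r.num : ℚ) := by
          rw [← Int.cast_natCast, Int.toNat_of_nonneg hnum_pos.le]
        have hbr : (r.den : ℚ) * r ^ N = (r.num : ℚ) * r ^ (N - 1) := by
          have hN : N = (N - 1) + 1 := by omega
          calc (r.den : ℚ) * r ^ N = (r * r.den) * r ^ (N - 1) := by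
                conv_lhs => rw [hN]
                rw [pow_succ]; ring
            _ = (r.num : ℚ) * r ^ (N - 1) := by rw [Rat.mul_den_eq_num]
        have step1 : repS r (fun k => if k = N then s else c'' k) (N + 1)
            = repS r c'' N + (s : ℚ) * r ^ N := by
          unfold repS
          rw [Finset.sum_range_succ]
          congr 1
          · refine Finset.sum_congr rfl fun k hk => ?_
            have : k ≠ N := by have := Finset.mem_range.mp hk; omega
            simp [this]
          · simp
        have step2 : repS r d N = repS r c N + ((q * r.num.toNat : ℕ) : ℚ) * r ^ (N - 1) := by
          rw [hd]
          exact repS_update r c (q * r.num.toNat) (by omega)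
        have step3 : repS r c (N + 1) = repS r c N + ((c N : ℕ) : ℚ) * r ^ N := by
          unfold repS
          rw [Finset.sum_range_succ]
        rw [step1, he'', step2, step3, hqs]
        push_cast [hAq]
        rw [mul_assoc (q : ℚ), ← hbr]
        ring


section
variable {r : ℚ}

lemma coprime_den_num (r : ℚ) : IsCoprime ((r.den : ℤ)) (r.num) := by
  rw [Int.isCoprime_iff_gcd_eq_one]
  simpa [Int.gcd, Nat.coprime_comm] using r.reduced.symm

/-- if `x * den^m` is an integer, the canonical coefficients above `m` vanish -/
lemma canonical_support {c : ℕ → ℕ} {N m : ℕ} {z : ℤ}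
    (hz0 : ∀ n, N ≤ n → c n = 0) (hcb : ∀ n, 1 ≤ n → c n < r.den)
    (hz : repS r c N * (r.den : ℚ) ^ m = (z : ℚ)) :
    ∀ n, m < n → c n = 0 := by
  have key : ∀ i n, m < n → N ≤ n + i → c n = 0 := by
    intro i
    induction i with
    | zero => intro n _ hN; exact hz0 n (by omega)
    | succ i ih =>
      intro n hmn hNi
      by_cases hN : N ≤ n + i
      · exact ih n hmn hN
      · -- N = n + i + 1 ; all coefficients above n vanish
        have htail : ∀ k, n + 1 ≤ k → c k = 0 := by
          intro k hk
          by_cases hkN : N ≤ k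
          · exact hz0 k hkN
          · exact ih k (by omega) (by omega)
        have hxn : repS r c N = repS r c (n + 1) :=
          repS_congr r c (by omega) htail
        obtain ⟨w, hw⟩ := repS_decomp r c n
        -- x * den^n is divisible by den since n > m
        have hq : repS r c N * (r.den : ℚ) ^ n = ((z * (r.den : ℤ) ^ (n - m) : ℤ) : ℚ) := by
          have hsplit : ((r.den : ℚ)) ^ n = (r.den : ℚ) ^ m * (r.den : ℚ) ^ (n - m) := by
            rw [← pow_add]; congr 1; omega
          rw [hsplit, ← mul_assoc, hz]
          push_cast
          ring
        have heq : (z * (r.den : ℤ) ^ (n - m) : ℤ)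
            = (c n : ℤ) * r.num ^ n + r.den * w := by
          have h' := hq
          rw [hxn] at h'
          exact_mod_cast h'.symm.trans hw
        have hdvd : ((r.den : ℤ)) ∣ (c n : ℤ) * r.num ^ n := by
          have h1 : ((r.den : ℤ)) ∣ z * (r.den : ℤ) ^ (n - m) := by
            refine Dvd.dvd.mul_left ?_ z
            exact dvd_pow_self _ (by omega)
          have h2 : ((r.den : ℤ)) ∣ r.den * w := ⟨w, rfl⟩
          have h3 : ((r.den : ℤ)) ∣ (c n : ℤ) * r.num ^ n + r.den * w := heq ▸ h1
          have h4 : (c n : ℤ) * r.num ^ n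
              = ((c n : ℤ) * r.num ^ n + r.den * w) - r.den * w := by ring
          rw [h4]
          exact dvd_sub h3 h2
        have hdvd2 : ((r.den : ℤ)) ∣ (c n : ℤ) :=
          ((coprime_den_num r).pow_right).dvd_of_dvd_mul_right hdvd
        have : (r.den : ℕ) ∣ c n := by exact_mod_cast hdvd2
        exact Nat.eq_zero_of_dvd_of_lt this (hcb n (by omega))
  intro n hn
  exact key N n hn (by omega)


lemma exists_canonical (h0 : 0 < r) {x : ℚ} (hx : x ∈ Sr r) :
    ∃ N c, (∀ n, N ≤ n → c n = 0) ∧ (∀ n, 1 ≤ n → c n < r.den) ∧ x = repS r c N := by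
  obtain ⟨N, c, hz, hxr⟩ := exists_rep hx
  obtain ⟨c', hz', hb', he'⟩ := exists_canonical_aux r h0 N c
  exact ⟨N, c', hz', hb', by rw [hxr, ← he']⟩

/-- L1: subtracting the forced coefficient at level `m` -/
lemma sub_coeff_mem (h0 : 0 < r) {x : ℚ} (hx : x ∈ Sr r) {m : ℕ} (hm : 1 ≤ m)
    {z : ℤ} (hz : x * (r.den : ℚ) ^ m = (z : ℚ)) {k : ℕ} (hk : k < r.den)
    (hcong : ((r.den : ℤ)) ∣ z - (k : ℤ) * r.num ^ m) :
    x - (k : ℚ) * r ^ m ∈ Sr r := by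
  obtain ⟨N, c, hz0, hcb, hxr⟩ := exists_canonical h0 hx
  have hsup : ∀ n, m < n → c n = 0 := canonical_support hz0 hcb (hxr ▸ hz)
  have hx1 : x = repS r c (m + 1) := by
    rcases le_total N (m + 1) with h | h
    · rw [hxr, repS_congr r c h hz0]
    · rw [hxr, repS_congr r c h (fun n hn => hsup n (by omega))]
  obtain ⟨w, hw⟩ := repS_decomp r c m
  have heq : z = (c m : ℤ) * r.num ^ m + r.den * w := by
    rw [hx1] at hz
    exact_mod_cast hz.symm.trans hw
  have hdvd : ((r.den : ℤ)) ∣ ((c m : ℤ) - k) * r.num ^ m := by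
    have h1 : ((c m : ℤ) - k) * r.num ^ m
        = (z - (k : ℤ) * r.num ^ m) - r.den * w := by rw [heq]; ring
    rw [h1]
    exact dvd_sub hcong ⟨w, rfl⟩
  have hdvd2 : ((r.den : ℤ)) ∣ ((c m : ℤ) - k) :=
    ((coprime_den_num r).pow_right).dvd_of_dvd_mul_right hdvd
  have hcmk : c m = k := by
    have hb1 : c m < r.den := hcb m hm
    have := Int.eq_zero_of_abs_lt_dvd hdvd2 (by
      rw [abs_lt]
      constructor <;> [skip; skip] <;> push_cast <;> omega)
    omega
  have hsplit : repS r c (m + 1) = repS r c m + (c m : ℚ) * r ^ m := by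
    unfold repS; rw [Finset.sum_range_succ]
  have : x - (k : ℚ) * r ^ m = repS r c m := by
    rw [hx1, hsplit, hcmk]; ring
  rw [this]
  exact repS_mem r c m


lemma num_toNat_cast (h0 : 0 < r) : ((r.num.toNat : ℚ)) = (r.num : ℚ) := by
  rw [← Int.cast_natCast, Int.toNat_of_nonneg (Rat.num_pos.mpr h0).le]

lemma num_lt_den (h0 : 0 < r) (h1 : r < 1) : r.num.toNat < r.den := by
  have h := Rat.lt_one_iff_num_lt_denom.mpr h1
  have h2 := Rat.num_pos.mpr h0
  omega

lemma pow_mul_den_pow' (r : ℚ) (n : ℕ) :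
    r ^ n * (r.den : ℚ) ^ n = ((r.num : ℚ)) ^ n := by
  rw [← mul_pow, Rat.mul_den_eq_num]

lemma den_mul_pow_succ (r : ℚ) (n : ℕ) :
    (r.den : ℚ) * r ^ (n + 1) = (r.num : ℚ) * r ^ n := by
  rw [pow_succ, ← mul_assoc, mul_comm ((r.den : ℚ)) (r ^ n), mul_assoc,
    mul_comm ((r.den : ℚ)) r, Rat.mul_den_eq_num]
  ring

lemma x_int_shift {x : ℚ} {N₀ : ℕ} {z : ℤ} (hzx : x * (r.den : ℚ) ^ N₀ = (z : ℚ))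
    {m : ℕ} (h : N₀ ≤ m) :
    x * (r.den : ℚ) ^ m = ((z * (r.den : ℤ) ^ (m - N₀) : ℤ) : ℚ) := by
  have hsplit : ((r.den : ℚ)) ^ m = (r.den : ℚ) ^ N₀ * (r.den : ℚ) ^ (m - N₀) := by
    rw [← pow_add]; congr 1; omega
  rw [hsplit, ← mul_assoc, hzx]
  push_cast; ring

/-- one borrowing step downward -/
lemma borrow_step (h0 : 0 < r) (h1 : r < 1) {x : ℚ} {N₀ : ℕ} {z : ℤ}
    (hzx : x * (r.den : ℚ) ^ N₀ = (z : ℚ)) (n : ℕ) (hn : N₀ ≤ n)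
    (hmem : x - (r.num.toNat : ℚ) * r ^ (n + 1) ∈ Sr r) :
    x - (r.num.toNat : ℚ) * r ^ n ∈ Sr r := by
  have hAcast := num_toNat_cast h0
  have hAB := num_lt_den h0 h1
  have hApos : 0 < r.num.toNat := by
    have := Rat.num_pos.mpr h0; omega
  set y := x - (r.num.toNat : ℚ) * r ^ (n + 1) with hy
  have hzy : y * (r.den : ℚ) ^ (n + 1)
      = ((z * (r.den : ℤ) ^ (n + 1 - N₀) - r.num ^ (n + 2) : ℤ) : ℚ) := by
    rw [hy, sub_mul, x_int_shift hzx (by omega : N₀ ≤ n + 1)]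
    have : (r.num.toNat : ℚ) * r ^ (n + 1) * (r.den : ℚ) ^ (n + 1)
        = (r.num : ℚ) ^ (n + 2) := by
      rw [mul_assoc, pow_mul_den_pow', hAcast, ← pow_succ']
    rw [this]
    push_cast; ring
  have hk : r.den - r.num.toNat < r.den := by omega
  have hcong : ((r.den : ℤ)) ∣ (z * (r.den : ℤ) ^ (n + 1 - N₀) - r.num ^ (n + 2))
      - ((r.den - r.num.toNat : ℕ) : ℤ) * r.num ^ (n + 1) := by
    have hc : ((r.den - r.num.toNat : ℕ) : ℤ) = (r.den : ℤ) - r.num := by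
      omega
    rw [hc]
    have he : (z * (r.den : ℤ) ^ (n + 1 - N₀) - r.num ^ (n + 2))
        - ((r.den : ℤ) - r.num) * r.num ^ (n + 1)
        = z * (r.den : ℤ) ^ (n + 1 - N₀) - (r.den : ℤ) * r.num ^ (n + 1) := by
      ring
    rw [he]
    refine dvd_sub ?_ ⟨r.num ^ (n + 1), rfl⟩
    exact Dvd.dvd.mul_left (dvd_pow_self _ (by omega)) z
  have hres := sub_coeff_mem h0 hmem (by omega : 1 ≤ n + 1) hzy hk hcong
  have hfin : y - ((r.den - r.num.toNat : ℕ) : ℚ) * r ^ (n + 1)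
      = x - (r.num.toNat : ℚ) * r ^ n := by
    rw [hy]
    have hc : ((r.den - r.num.toNat : ℕ) : ℚ) = (r.den : ℚ) - (r.num.toNat : ℚ) := by
      push_cast [Nat.cast_sub hAB.le]; ring
    rw [hc]
    have hd : (r.den : ℚ) * r ^ (n + 1) = (r.num : ℚ) * r ^ n := den_mul_pow_succ r n
    have : x - ↑r.num.toNat * r ^ (n + 1) - ((r.den : ℚ) - ↑r.num.toNat) * r ^ (n + 1)
        = x - (r.den : ℚ) * r ^ (n + 1) := by ring
    rw [this, hd, hAcast]
  rw [hfin] at hres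
  exact hres

/-- iterated borrowing -/
lemma borrow_iter (h0 : 0 < r) (h1 : r < 1) {x : ℚ} {N₀ : ℕ} {z : ℤ}
    (hzx : x * (r.den : ℚ) ^ N₀ = (z : ℚ)) :
    ∀ i, x - (r.num.toNat : ℚ) * r ^ (N₀ + i) ∈ Sr r →
      x - (r.num.toNat : ℚ) * r ^ N₀ ∈ Sr r := by
  intro i
  induction i with
  | zero => exact fun h => h
  | succ i ih =>
    intro h
    exact ih (borrow_step h0 h1 hzx (N₀ + i) (by omega) h)

/-- entry step : from subtracting `r^m` to subtracting `num * r^(m-1)` -/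
lemma borrow_entry (h0 : 0 < r) (h1 : r < 1) {x : ℚ} {N₀ : ℕ} {z : ℤ}
    (hzx : x * (r.den : ℚ) ^ N₀ = (z : ℚ)) {m : ℕ} (hm : N₀ < m)
    (hmem : x - r ^ m ∈ Sr r) :
    x - (r.num.toNat : ℚ) * r ^ (m - 1) ∈ Sr r := by
  have hAcast := num_toNat_cast h0
  have hbpos : 0 < r.den := r.pos
  set y := x - r ^ m with hy
  have hzy : y * (r.den : ℚ) ^ m
      = ((z * (r.den : ℤ) ^ (m - N₀) - r.num ^ m : ℤ) : ℚ) := by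
    rw [hy, sub_mul, x_int_shift hzx (by omega : N₀ ≤ m), pow_mul_den_pow']
    push_cast; ring
  have hk : r.den - 1 < r.den := by omega
  have hcong : ((r.den : ℤ)) ∣ (z * (r.den : ℤ) ^ (m - N₀) - r.num ^ m)
      - ((r.den - 1 : ℕ) : ℤ) * r.num ^ m := by
    have hc : ((r.den - 1 : ℕ) : ℤ) = (r.den : ℤ) - 1 := by push_cast [hbpos]; omega
    rw [hc]
    have he : (z * (r.den : ℤ) ^ (m - N₀) - r.num ^ m)
        - ((r.den : ℤ) - 1) * r.num ^ m
        = z * (r.den : ℤ) ^ (m - N₀) - (r.den : ℤ) * r.num ^ m := by ring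
    rw [he]
    refine dvd_sub ?_ ⟨r.num ^ m, rfl⟩
    exact Dvd.dvd.mul_left (dvd_pow_self _ (by omega)) z
  have hres := sub_coeff_mem h0 hmem (by omega : 1 ≤ m) hzy hk hcong
  have hfin : y - ((r.den - 1 : ℕ) : ℚ) * r ^ m
      = x - (r.num.toNat : ℚ) * r ^ (m - 1) := by
    rw [hy]
    have hc : ((r.den - 1 : ℕ) : ℚ) = (r.den : ℚ) - 1 := by
      push_cast [Nat.cast_sub hbpos]; ring
    rw [hc]
    have hmm : m = (m - 1) + 1 := by omega
    have hd : (r.den : ℚ) * r ^ m = (r.num : ℚ) * r ^ (m - 1) := by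
      conv_lhs => rw [hmm]
      exact den_mul_pow_succ r (m - 1)
    have : x - r ^ m - ((r.den : ℚ) - 1) * r ^ m = x - (r.den : ℚ) * r ^ m := by ring
    rw [this, hd, hAcast]
  rw [hfin] at hres
  exact hres

/-- full borrowing lemma -/
lemma borrow (h0 : 0 < r) (h1 : r < 1) {x : ℚ} {N₀ : ℕ} {z : ℤ}
    (hzx : x * (r.den : ℚ) ^ N₀ = (z : ℚ)) {m : ℕ} (hm : N₀ < m)
    (hmem : x - r ^ m ∈ Sr r) :
    x - (r.num.toNat : ℚ) * r ^ N₀ ∈ Sr r := by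
  have h1' := borrow_entry h0 h1 hzx hm hmem
  have hmm : m - 1 = N₀ + (m - 1 - N₀) := by omega
  rw [hmm] at h1'
  exact borrow_iter h0 h1 hzx _ h1'


end
end Mcd

open Mcd in
/-- For a rational `r` with `0 < r < 1` and numerator at least `2`, the additive monoid
`S_r = ⟨rⁿ : n ∈ ℕ₀⟩` is an MCD-monoid: every finite nonempty subset `T` of `S_r` admits a
maximal common (additive) divisor `d`, i.e. a common divisor `d` such that every common divisor
`e` of `{t - d : t ∈ T}` is invertible in `S_r`. -/
theorem stmt11 (r : ℚ) (h0 : 0 < r) (h1 : r < 1) (hnum : 2 ≤ r.num)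
    (T : Finset ℚ) (hT : (T : Set ℚ) ⊆ (Sr r : Set ℚ)) (hne : T.Nonempty) :
    ∃ d ∈ Sr r, (∀ t ∈ T, ∃ q ∈ Sr r, t = d + q) ∧
      ∀ e ∈ Sr r, (∀ t ∈ T, ∃ q ∈ Sr r, t = d + (e + q)) →
        ∃ e' ∈ Sr r, e + e' = 0 := by
  classical
  have hbpos : (0 : ℚ) < (r.den : ℚ) := by exact_mod_cast r.pos
  have hApos : 0 < r.num.toNat := by omega
  have hAcast := num_toNat_cast h0
  -- a common denominator exponent N₀ for all elements of T
  have hP : ∀ t : ℚ, ∃ N : ℕ, ∃ z : ℤ, t ∈ T → t * (r.den : ℚ) ^ N = (z : ℚ) := by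
    intro t
    by_cases ht : t ∈ T
    · obtain ⟨N, c, hz0, hrep⟩ := exists_rep (hT ht)
      exact ⟨N, _, fun _ => by rw [hrep]; exact repS_int r c (by omega)⟩
    · exact ⟨0, 0, fun h => absurd h ht⟩
  choose f g hfg using hP
  set N₀ := T.sup f with hN₀
  have hint : ∀ t ∈ T, ∃ z : ℤ, t * (r.den : ℚ) ^ N₀ = (z : ℚ) := by
    intro t ht
    exact ⟨g t * (r.den : ℤ) ^ (N₀ - f t),
      x_int_shift (hfg t ht) (Finset.le_sup ht)⟩
  -- the set of common divisors with denominator dividing den^N₀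
  set D : Set ℚ := {x | x ∈ Sr r ∧ (∀ t ∈ T, t - x ∈ Sr r) ∧
    ∃ z : ℤ, x * (r.den : ℚ) ^ N₀ = (z : ℚ)} with hD
  have h0D : (0 : ℚ) ∈ D := by
    refine ⟨(Sr r).zero_mem, fun t ht => by simpa using hT ht, 0, by simp⟩
  obtain ⟨t₀, ht₀⟩ := hne
  have hfin : D.Finite := by
    refine Set.Finite.subset ((Set.finite_Icc (0 : ℤ) ⌈t₀ * (r.den : ℚ) ^ N₀⌉).image
      (fun z : ℤ => (z : ℚ) / (r.den : ℚ) ^ N₀)) ?_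
    rintro x ⟨hxS, hdiv, z, hz⟩
    have hx0 : 0 ≤ x := Sr_nonneg h0 hxS
    have hxt : x ≤ t₀ := by
      have := Sr_nonneg h0 (hdiv t₀ ht₀)
      linarith
    have hpow : (0 : ℚ) < (r.den : ℚ) ^ N₀ := by positivity
    refine ⟨z, ?_, ?_⟩
    · rw [Set.mem_Icc]
      constructor
      · have : (0 : ℚ) ≤ (z : ℚ) := by rw [← hz]; positivity
        exact_mod_cast this
      · have h1' : (z : ℚ) ≤ t₀ * (r.den : ℚ) ^ N₀ := by
          rw [← hz]
          exact mul_le_mul_of_nonneg_right hxt hpow.le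
        have h2' : (t₀ * (r.den : ℚ) ^ N₀) ≤ (⌈t₀ * (r.den : ℚ) ^ N₀⌉ : ℚ) :=
          Int.le_ceil _
        exact_mod_cast h1'.trans h2'
    · field_simp [← hz]
      rw [← hz]; ring
  obtain ⟨d, hdD, hdmax⟩ := Set.Finite.exists_maximalFor id D hfin ⟨0, h0D⟩
  obtain ⟨hdS, hddiv, zd, hzd⟩ := hdD
  have hdlt : ∀ x ∈ D, d < x → False := by
    intro x hx hlt
    have h := hdmax hx hlt.le
    simp only [id] at h
    exact (not_le.mpr hlt) h
  refine ⟨d, hdS, fun t ht => ⟨t - d, hddiv t ht, by ring⟩, ?_⟩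
  intro e heS hediv
  suffices he0 : e = 0 by
    exact ⟨0, (Sr r).zero_mem, by rw [he0, add_zero]⟩
  by_contra he0
  have hcd : ∀ t ∈ T, t - d - e ∈ Sr r := by
    intro t ht
    obtain ⟨q, hq, hqe⟩ := hediv t ht
    have : t - d - e = q := by rw [hqe]; ring
    rw [this]; exact hq
  obtain ⟨N, c, hz0, hcb, hce⟩ := exists_canonical h0 heS
  set M := min (N₀ + 1) N with hM
  set elow : ℚ := repS r c M with helow
  set ehigh : ℚ := ∑ n ∈ Finset.Ico M N, (c n : ℚ) * r ^ n with hehigh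
  have hsplit : e = elow + ehigh := by
    rw [hce, helow, hehigh, repS, repS, Finset.range_eq_Ico, Finset.range_eq_Ico]
    exact (Finset.sum_Ico_consecutive (fun n => (c n : ℚ) * r ^ n) (Nat.zero_le M) (min_le_right _ _ : M ≤ N)).symm
  have hhighS : ehigh ∈ Sr r := sum_pow_mem r c _
  have hlownn : 0 ≤ elow := Sr_nonneg h0 (repS_mem r c M)
  by_cases hlow0 : elow = 0
  · -- Case B : all mass of e sits above N₀
    have hehigh0 : ehigh ≠ 0 := by
      intro h
      exact he0 (by rw [hsplit, hlow0, h, add_zero])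
    obtain ⟨m, hmIco, hcm⟩ := Finset.exists_ne_zero_of_sum_ne_zero hehigh0
    have hmM : M ≤ m ∧ m < N := Finset.mem_Ico.mp hmIco
    have hcm1 : 1 ≤ c m := by
      rcases Nat.eq_zero_or_pos (c m) with h | h
      · exfalso; apply hcm; rw [h]; simp
      · exact h
    have hmN₀ : N₀ < m := by
      have h5 : (N₀ + 1) ⊓ N ≤ m := by rw [← hM]; exact hmM.1
      have h6 := hmM.2
      omega
    -- e - r^m ∈ Sr r
    set c' : ℕ → ℕ := fun k => if k = m then c m - 1 else c k with hc'
    have hfun : (fun n => if n = m then c' m + 1 else c' n) = c := by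
      funext k
      by_cases h : k = m
      · subst h
        simp [hc']
        omega
      · simp only [hc', if_neg h]
    have hup := repS_update r c' 1 (show m < N by omega)
    rw [hfun] at hup
    have hsubmem : e - r ^ m ∈ Sr r := by
      have : e - r ^ m = repS r c' N := by
        rw [hce, hup]; push_cast; ring
      rw [this]; exact repS_mem r c' N
    -- borrow for each t
    have hkey : ∀ t ∈ T, (t - d) - (r.num.toNat : ℚ) * r ^ N₀ ∈ Sr r := by
      intro t ht
      obtain ⟨zt, hzt⟩ := hint t ht
      have hzx : (t - d) * (r.den : ℚ) ^ N₀ = ((zt - zd : ℤ) : ℚ) := by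
        rw [sub_mul, hzt, hzd]; push_cast; ring
      have hx : (t - d) - r ^ m ∈ Sr r := by
        have : (t - d) - r ^ m = (t - d - e) + (e - r ^ m) := by ring
        rw [this]
        exact (Sr r).add_mem (hcd t ht) hsubmem
      exact borrow h0 h1 hzx hmN₀ hx
    -- d + num * r^N₀ is a bigger element of D
    have hx'' : d + (r.num.toNat : ℚ) * r ^ N₀ ∈ D := by
      refine ⟨?_, ?_, ?_⟩
      · refine (Sr r).add_mem hdS ?_
        have h : r ^ N₀ ∈ Sr r := AddSubmonoid.subset_closure ⟨N₀, rfl⟩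
        simpa [nsmul_eq_mul] using AddSubmonoid.nsmul_mem (Sr r) h r.num.toNat
      · intro t ht
        have : t - (d + (r.num.toNat : ℚ) * r ^ N₀)
            = (t - d) - (r.num.toNat : ℚ) * r ^ N₀ := by ring
        rw [this]
        exact hkey t ht
      · refine ⟨zd + r.num ^ (N₀ + 1), ?_⟩
        rw [add_mul, hzd, mul_assoc, pow_mul_den_pow', hAcast, ← pow_succ']
        push_cast; ring
    refine hdlt _ hx'' ?_
    have : (0 : ℚ) < (r.num.toNat : ℚ) * r ^ N₀ := by positivity
    linarith
  · -- Case A : e has mass at or below N₀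
    have hlowpos : 0 < elow := lt_of_le_of_ne hlownn (Ne.symm hlow0)
    have hx' : d + elow ∈ D := by
      refine ⟨(Sr r).add_mem hdS (repS_mem r c M), ?_, ?_⟩
      · intro t ht
        have : t - (d + elow) = (t - d - e) + ehigh := by
          rw [hsplit]; ring
        rw [this]
        exact (Sr r).add_mem (hcd t ht) hhighS
      · have hzl := repS_int r c (show M ≤ N₀ + 1 by rw [hM]; omega)
        refine ⟨zd + ∑ n ∈ Finset.range M, (c n : ℤ) * r.num ^ n * (r.den : ℤ) ^ (N₀ - n), ?_⟩
        rw [add_mul, hzd, helow, hzl]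
        push_cast; ring
    refine hdlt _ hx' (by linarith)
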